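/- On the regular triangular tiling of the plane (every vertex of degree 6), the Ollivier–Ricci curvature of every edge equals 0; likewise on the square tiling (every vertex of degree 4 with girth 4), the Ollivier–Ricci curvature of every edge equals 0. -/

import Mathlib

open Classical Filter
noncomputable section

/-- A coupling (transference plan) between two measures on `V`, given as
nonnegative density functions. -/
def IsCoupling {V : Type*} (μ ν : V → ℝ) (ξ : V → V → ℝ) : Prop :=
  (∀ y y', 0 ≤ ξ y y') ∧ (∀ y, ∑' y', ξ y y' = μ y) ∧ (∀ y', ∑' y, ξ y y' = ν y')

/-- The 1-Wasserstein distance between `μ` and `ν` for the cost function `ρ`. -/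
def W1 {V : Type*} (ρ : V → V → ℝ) (μ ν : V → ℝ) : ℝ :=
  sInf {c | ∃ ξ, IsCoupling μ ν ξ ∧
    HasSum (fun p : V × V => ξ p.1 p.2 * ρ p.1 p.2) c}

/-- The shortest-path distance of a graph, as a real number. -/
def graphDist {V : Type*} (G : SimpleGraph V) (x y : V) : ℝ := G.dist x y

/-- The degree of a vertex. -/
def deg {V : Type*} (G : SimpleGraph V) (x : V) : ℕ := Nat.card {y | G.Adj x y}

/-- The Dirac measure at `x`. -/
def dirac {V : Type*} (x : V) : V → ℝ := fun y => if y = x then 1 else 0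

/-- The lazy random walk `μ_x^t = (1-t)·δ_x + t·(uniform measure on the neighbors of x)`. -/
def lazyWalk {V : Type*} (G : SimpleGraph V) (t : ℝ) (x y : V) : ℝ :=
  if y = x then 1 - t else if G.Adj x y then t / (deg G x) else 0

/-- The coarse Ricci curvature `κ^t(x,x') = 1 - W₁(μ_x^t, μ_{x'}^t)/d(x,x')`. -/
def kappa {V : Type*} (G : SimpleGraph V) (t : ℝ) (x x' : V) : ℝ :=
  1 - W1 (graphDist G) (lazyWalk G t x) (lazyWalk G t x') / graphDist G x x'

/-- The regular triangular lattice on `ℤ × ℤ`: each vertex is adjacent to the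
six vertices obtained by adding `(±1,0)`, `(0,±1)`, `(1,1)`, `(-1,-1)`. -/
def triGraph : SimpleGraph (ℤ × ℤ) where
  Adj u v := (v.1 - u.1, v.2 - u.2) ∈
    ({(1,0), (-1,0), (0,1), (0,-1), (1,1), (-1,-1)} : Set (ℤ × ℤ))
  symm := by
    constructor
    rintro ⟨a, b⟩ ⟨c, d⟩ h
    simp only [Set.mem_insert_iff, Set.mem_singleton_iff, Prod.mk.injEq] at h ⊢
    omega
  loopless := by
    constructor
    rintro ⟨a, b⟩ h
    simp only [Set.mem_insert_iff, Set.mem_singleton_iff, Prod.mk.injEq] at h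
    omega

/-- The square lattice `ℤ²`: adjacency iff the ℓ¹-distance is 1. -/
def squareGraph : SimpleGraph (ℤ × ℤ) where
  Adj u v := (v.1 - u.1).natAbs + (v.2 - u.2).natAbs = 1
  symm := by constructor; rintro ⟨a, b⟩ ⟨c, d⟩ h; simp only at h ⊢; omega
  loopless := by constructor; rintro ⟨a, b⟩ h; simp only at h; omega

lemma walk_bound' {V : Type*} (G : SimpleGraph V) (f : V → ℝ)
    (hf : ∀ u v, G.Adj u v → |f u - f v| ≤ 1) :
    ∀ {u v : V} (p : G.Walk u v), |f u - f v| ≤ p.length := by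
  intro u v p
  induction p with
  | nil => simp
  | @cons u w v h p ih =>
    calc |f u - f v| ≤ |f u - f w| + |f w - f v| := abs_sub_le _ _ _
    _ ≤ 1 + p.length := add_le_add (hf _ _ h) ih
    _ = ((p.cons h).length : ℝ) := by simp [SimpleGraph.Walk.length_cons]; ring

lemma dist_bound' {V : Type*} (G : SimpleGraph V) (f : V → ℝ)
    (hf : ∀ u v, G.Adj u v → |f u - f v| ≤ 1) {u v : V} (hr : G.Reachable u v) :
    |f u - f v| ≤ (G.dist u v : ℝ) := by
  obtain ⟨p, hp⟩ := hr.exists_walk_length_eq_dist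
  simpa [hp] using walk_bound' G f hf p

section Main
variable (G : SimpleGraph (ℤ × ℤ)) (N : Finset (ℤ × ℤ))
variable (hN : ∀ u v, G.Adj u v ↔ v - u ∈ N)

include hN in
lemma reach_aux (h10 : ((1:ℤ),(0:ℤ)) ∈ N) (hm10 : ((-1:ℤ),(0:ℤ)) ∈ N)
    (h01 : ((0:ℤ),(1:ℤ)) ∈ N) (h0m1 : ((0:ℤ),(-1:ℤ)) ∈ N) :
    ∀ (n : ℕ) (u v : ℤ × ℤ), (v.1 - u.1).natAbs + (v.2 - u.2).natAbs = n →
      G.Reachable u v := by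
  intro n
  induction n with
  | zero =>
    intro u v h
    have : u = v := Prod.ext (by omega) (by omega)
    exact this ▸ SimpleGraph.Reachable.refl u
  | succ n ih =>
    intro u v h
    rcases lt_trichotomy u.1 v.1 with h1 | h1 | h1
    · have hadj : G.Adj u (u.1 + 1, u.2) := by
        rw [hN]; convert h10 using 2 <;> simp [Prod.ext_iff]
      exact hadj.reachable.trans (ih (u.1 + 1, u.2) v (by simp; omega))
    · rcases lt_trichotomy u.2 v.2 with h2 | h2 | h2
      · have hadj : G.Adj u (u.1, u.2 + 1) := by
          rw [hN]; convert h01 using 2 <;> simp [Prod.ext_iff]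
        exact hadj.reachable.trans (ih (u.1, u.2 + 1) v (by simp; omega))
      · omega
      · have hadj : G.Adj u (u.1, u.2 - 1) := by
          rw [hN]; convert h0m1 using 2 <;> simp [Prod.ext_iff]
        exact hadj.reachable.trans (ih (u.1, u.2 - 1) v (by simp; omega))
    · have hadj : G.Adj u (u.1 - 1, u.2) := by
        rw [hN]; convert hm10 using 2 <;> simp [Prod.ext_iff]
      exact hadj.reachable.trans (ih (u.1 - 1, u.2) v (by simp; omega))

include hN in
lemma zero_not_mem : ((0:ℤ),(0:ℤ)) ∉ N := by
  intro h
  exact G.loopless.irrefl (0,0) ((hN _ _).2 (by simp only [sub_self]; exact h))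

include hN in
lemma deg_eq (x : ℤ × ℤ) : deg G x = N.card := by
  have hset : {y | G.Adj x y} = ↑(N.image (fun n => x + n)) := by
    ext y
    simp only [Set.mem_setOf_eq, Finset.coe_image, Set.mem_image, Finset.mem_coe, hN]
    constructor
    · intro h; exact ⟨y - x, h, by abel⟩
    · rintro ⟨n, hn, rfl⟩; simpa using hn
  rw [deg, hset, Nat.card_coe_set_eq, Set.ncard_coe_finset,
    Finset.card_image_of_injective _ (fun a b hab => by simpa using hab)]

lemma lazyWalk_nonneg (t : ℝ) (ht : 0 ≤ t) (ht1 : t ≤ 1) (x y : ℤ × ℤ) :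
    0 ≤ lazyWalk G t x y := by
  unfold lazyWalk
  split_ifs
  · linarith
  · positivity
  · exact le_refl 0

/-- the support finset of the lazy walk at `z` -/
def supp (z : ℤ × ℤ) : Finset (ℤ × ℤ) := insert z (N.image (fun n => z + n))

include hN in
lemma not_mem_image (z : ℤ × ℤ) : z ∉ N.image (fun n => z + n) := by
  simp only [Finset.mem_image, not_exists]
  rintro n ⟨hn, hzn⟩
  have : n = ((0:ℤ),(0:ℤ)) := by
    have := hzn; rw [Prod.ext_iff] at this ⊢; simp at this ⊢; omega
  exact zero_not_mem G N hN (this ▸ hn)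

include hN in
lemma lazy_off (t : ℝ) (z y : ℤ × ℤ) (hy : y ∉ supp N z) : lazyWalk G t z y = 0 := by
  unfold lazyWalk
  have h1 : ¬ y = z := by intro h; exact hy (by simp [supp, h])
  have h2 : ¬ G.Adj z y := by
    intro h
    apply hy
    simp only [supp, Finset.mem_insert, Finset.mem_image]
    exact Or.inr ⟨y - z, (hN z y).1 h, by abel⟩
  rw [if_neg h1, if_neg h2]

include hN in
lemma lazy_at (t : ℝ) (z n : ℤ × ℤ) (hn : n ∈ N) :
    lazyWalk G t z (z + n) = t / N.card := by
  unfold lazyWalk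
  rw [if_neg, if_pos, deg_eq G N hN]
  · exact (hN z (z + n)).2 (by simpa using hn)
  · intro h
    have : n = ((0:ℤ),(0:ℤ)) := by rw [Prod.ext_iff] at h ⊢; simp at h ⊢; omega
    exact zero_not_mem G N hN (this ▸ hn)

include hN in
lemma lazy_mass (t : ℝ) (hD : (0:ℕ) < N.card) (z : ℤ × ℤ) :
    ∑ y ∈ supp N z, lazyWalk G t z y = 1 := by
  rw [supp, Finset.sum_insert (not_mem_image G N hN z),
    Finset.sum_image (fun a _ b _ hab => by simpa using hab)]
  have h1 : lazyWalk G t z z = 1 - t := by unfold lazyWalk; rw [if_pos rfl]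
  have h2 : ∀ n ∈ N, lazyWalk G t z (z + n) = t / N.card := fun n hn => lazy_at G N hN t z n hn
  rw [h1, Finset.sum_congr rfl h2, Finset.sum_const, nsmul_eq_mul]
  have : (N.card : ℝ) ≠ 0 := Nat.cast_ne_zero.mpr hD.ne'
  field_simp
  ring

include hN in
lemma lazy_exp (t : ℝ) (hD : (0:ℕ) < N.card) (a b : ℝ)
    (hsum : ∑ n ∈ N, (a * (n.1:ℝ) + b * (n.2:ℝ)) = 0) (z : ℤ × ℤ) :
    ∑ y ∈ supp N z, lazyWalk G t z y * (a * (y.1:ℝ) + b * (y.2:ℝ))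
      = a * (z.1:ℝ) + b * (z.2:ℝ) := by
  rw [supp, Finset.sum_insert (not_mem_image G N hN z),
    Finset.sum_image (fun p _ q _ hab => by simpa using hab)]
  have h1 : lazyWalk G t z z = 1 - t := by unfold lazyWalk; rw [if_pos rfl]
  have h2 : ∀ n ∈ N, lazyWalk G t z (z + n) * (a * ((z+n).1:ℝ) + b * ((z+n).2:ℝ))
      = (t / N.card) * (a * (z.1:ℝ) + b * (z.2:ℝ)) + (t / N.card) * (a * (n.1:ℝ) + b * (n.2:ℝ)) := by
    intro n hn
    rw [lazy_at G N hN t z n hn]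
    simp only [Prod.fst_add, Prod.snd_add]
    push_cast
    ring
  rw [h1, Finset.sum_congr rfl h2, Finset.sum_add_distrib, Finset.sum_const,
    ← Finset.mul_sum, hsum, nsmul_eq_mul]
  have : (N.card : ℝ) ≠ 0 := Nat.cast_ne_zero.mpr hD.ne'
  field_simp
  ring
end Main

section Main2
variable (G : SimpleGraph (ℤ × ℤ)) (N : Finset (ℤ × ℤ))

lemma W1_eq_one (hN : ∀ u v, G.Adj u v ↔ v - u ∈ N)
    (h10 : ((1:ℤ),(0:ℤ)) ∈ N) (hm10 : ((-1:ℤ),(0:ℤ)) ∈ N)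
    (h01 : ((0:ℤ),(1:ℤ)) ∈ N) (h0m1 : ((0:ℤ),(-1:ℤ)) ∈ N)
    (x x' : ℤ × ℤ) (hadj : G.Adj x x')
    (a b : ℝ)
    (hLip : ∀ n ∈ N, |a * (n.1:ℝ) + b * (n.2:ℝ)| ≤ 1)
    (hsum : ∑ n ∈ N, (a * (n.1:ℝ) + b * (n.2:ℝ)) = 0)
    (he : a * ((x'.1:ℝ) - (x.1:ℝ)) + b * ((x'.2:ℝ) - (x.2:ℝ)) = 1)
    (t : ℝ) (ht : 0 < t) (ht1 : t < 1) :
    W1 (graphDist G) (lazyWalk G t x) (lazyWalk G t x') = 1 := by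
  have hD : (0:ℕ) < N.card := Finset.card_pos.mpr ⟨_, h10⟩
  have hreach : ∀ u v : ℤ × ℤ, G.Reachable u v :=
    fun u v => reach_aux G N hN h10 hm10 h01 h0m1 _ u v rfl
  set f : ℤ × ℤ → ℝ := fun v => a * (v.1:ℝ) + b * (v.2:ℝ) with hf
  have hfadj : ∀ u v, G.Adj u v → |f u - f v| ≤ 1 := by
    intro u v h
    have hm := hLip (v - u) ((hN u v).1 h)
    have hval : f v - f u = a * (((v - u).1 : ℤ) : ℝ) + b * (((v - u).2 : ℤ) : ℝ) := by
      simp only [hf, Prod.fst_sub, Prod.snd_sub]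
      push_cast
      ring
    rw [abs_sub_comm, hval]
    exact hm
  have hdistb : ∀ u v : ℤ × ℤ, f v - f u ≤ graphDist G u v := by
    intro u v
    calc f v - f u ≤ |f v - f u| := le_abs_self _
    _ = |f u - f v| := abs_sub_comm _ _
    _ ≤ (G.dist u v : ℝ) := dist_bound' G f hfadj (hreach u v)
  set μ := lazyWalk G t x with hμ
  set ν := lazyWalk G t x' with hν
  have heN : x' - x ∈ N := (hN x x').1 hadj
  set ξ : ℤ × ℤ → ℤ × ℤ → ℝ := fun y y' => if y' = y + (x' - x) then μ y else 0 with hξ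
  have hcoup : IsCoupling μ ν ξ := by
    refine ⟨?_, ?_, ?_⟩
    · intro y y'
      simp only [hξ]
      split_ifs
      · exact lazyWalk_nonneg G t ht.le ht1.le x y
      · exact le_refl 0
    · intro y
      exact tsum_ite_eq (y + (x' - x)) (fun _ => μ y)
    · intro y'
      have hfun : (fun y => ξ y y') =
          (fun y => if y = y' - (x' - x) then μ (y' - (x' - x)) else 0) := by
        funext y
        by_cases h : y = y' - (x' - x)
        · rw [hξ]
          simp only
          rw [if_pos (by rw [h]; abel), if_pos h, h]
        · rw [hξ]
          simp only
          rw [if_neg (fun hc => h (by rw [hc]; abel)), if_neg h]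
      rw [hfun, tsum_ite_eq (y' - (x' - x)) (fun _ => μ (y' - (x' - x)))]
      show lazyWalk G t x (y' - (x' - x)) = lazyWalk G t x' y'
      have h1 : (y' - (x' - x) = x) ↔ (y' = x') := by
        rw [Prod.ext_iff, Prod.ext_iff]
        simp only [Prod.fst_sub, Prod.snd_sub]
        omega
      have h2 : G.Adj x (y' - (x' - x)) ↔ G.Adj x' y' := by
        rw [hN, hN]
        have : y' - (x' - x) - x = y' - x' := by abel
        rw [this]
      unfold lazyWalk
      rw [deg_eq G N hN x, deg_eq G N hN x']
      by_cases hy : y' = x'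
      · rw [if_pos (h1.mpr hy), if_pos hy]
      · rw [if_neg (fun hc => hy (h1.mp hc)), if_neg hy]
        by_cases hadj2 : G.Adj x' y'
        · rw [if_pos (h2.mpr hadj2), if_pos hadj2]
        · rw [if_neg (fun hc => hadj2 (h2.mp hc)), if_neg hadj2]
  have hub : (1:ℝ) ∈ {c | ∃ ξ, IsCoupling μ ν ξ ∧
      HasSum (fun p : (ℤ×ℤ) × (ℤ×ℤ) => ξ p.1 p.2 * graphDist G p.1 p.2) c} := by
    refine ⟨ξ, hcoup, ?_⟩
    have hvan : ∀ p ∉ (supp N x).image (fun y => (y, y + (x' - x))),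
        ξ p.1 p.2 * graphDist G p.1 p.2 = 0 := by
      intro p hp
      by_cases hcond : p.2 = p.1 + (x' - x)
      · by_cases hx1 : p.1 ∈ supp N x
        · exfalso
          apply hp
          apply Finset.mem_image.mpr
          exact ⟨p.1, hx1, Prod.ext rfl hcond.symm⟩
        · simp only [hξ, if_pos hcond]
          rw [hμ, lazy_off G N hN t x p.1 hx1, zero_mul]
      · simp only [hξ, if_neg hcond, zero_mul]
    have hsum1 : ∑ p ∈ (supp N x).image (fun y => (y, y + (x' - x))),
        ξ p.1 p.2 * graphDist G p.1 p.2 = 1 := by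
      rw [Finset.sum_image (fun p _ q _ hpq => (Prod.ext_iff.mp hpq).1)]
      have hterm : ∀ y ∈ supp N x,
          ξ y (y + (x' - x)) * graphDist G y (y + (x' - x)) = μ y := by
        intro y _
        have hadjy : G.Adj y (y + (x' - x)) := by
          rw [hN]
          have : y + (x' - x) - y = x' - x := by abel
          rw [this]; exact heN
        have hd : graphDist G y (y + (x' - x)) = 1 := by
          unfold graphDist
          rw [SimpleGraph.dist_eq_one_iff_adj.mpr hadjy]
          norm_num
        rw [hd, mul_one, hξ]
        simp
      rw [Finset.sum_congr rfl hterm]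
      exact lazy_mass G N hN t hD x
    exact hsum1 ▸ hasSum_sum_of_ne_finset_zero hvan
  have hlb : ∀ c ∈ {c | ∃ ξ, IsCoupling μ ν ξ ∧
      HasSum (fun p : (ℤ×ℤ) × (ℤ×ℤ) => ξ p.1 p.2 * graphDist G p.1 p.2) c}, 1 ≤ c := by
    rintro c ⟨ζ, ⟨hpos, hrowm, hcolm⟩, hc⟩
    have hgsum : Summable (fun p : (ℤ×ℤ) × (ℤ×ℤ) => ζ p.1 p.2 * graphDist G p.1 p.2) :=
      hc.summable
    have hgnn : ∀ p : (ℤ×ℤ) × (ℤ×ℤ), 0 ≤ ζ p.1 p.2 * graphDist G p.1 p.2 := by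
      intro p
      exact mul_nonneg (hpos _ _) (by unfold graphDist; positivity)
    have hd1 : ∀ u v : ℤ×ℤ, u ≠ v → (1:ℝ) ≤ graphDist G u v := by
      intro u v huv
      unfold graphDist
      exact_mod_cast Nat.one_le_iff_ne_zero.mpr ((hreach u v).pos_dist_of_ne huv).ne'
    have key_summ : ∀ (F : (ℤ×ℤ) → ℝ) (w : ℤ×ℤ),
        (∀ y', 0 ≤ F y') → Summable (fun y' => F y' * graphDist G w y') →
        Summable F := by
      intro F w hFnn hFS
      apply Summable.of_nonneg_of_le hFnn
        (f := fun y' => F y' * graphDist G w y' + (if y' = w then F w else 0))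
      · intro y'
        by_cases h : y' = w
        · subst h
          have := mul_nonneg (hFnn y') (show (0:ℝ) ≤ graphDist G y' y' by unfold graphDist; positivity)
          simp only [if_pos rfl, if_true]
          linarith
        · have h1 := hd1 w y' (fun hc => h hc.symm)
          rw [if_neg h, add_zero]
          calc F y' = F y' * 1 := (mul_one _).symm
          _ ≤ F y' * graphDist G w y' := mul_le_mul_of_nonneg_left h1 (hFnn y')
      · exact hFS.add (hasSum_ite_eq w (F w)).summable
    have hrowS : ∀ y, Summable (fun y' => ζ y y') := by
      intro y
      exact key_summ (fun y' => ζ y y') y (fun y' => hpos y y') (hgsum.prod_factor y)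
    have hcolS : ∀ y', Summable (fun y => ζ y y') := by
      intro y'
      have h1 : Summable (fun y => ζ y y' * graphDist G y y') := by
        have := hgsum.prod_symm.prod_factor y'
        simpa using this
      apply Summable.of_nonneg_of_le (fun y => hpos y y')
        (f := fun y => ζ y y' * graphDist G y y' + (if y = y' then ζ y' y' else 0))
      · intro y
        by_cases h : y = y'
        · subst h
          have := hgnn (y, y)
          simp only [if_pos rfl, if_true]
          simp only at this
          linarith
        · have hge := hd1 y y' h
          rw [if_neg h, add_zero]
          calc ζ y y' = ζ y y' * 1 := (mul_one _).symm
          _ ≤ ζ y y' * graphDist G y y' := mul_le_mul_of_nonneg_left hge (hpos _ _)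
      · exact h1.add (hasSum_ite_eq y' (ζ y' y')).summable
    have hrow0 : ∀ y ∉ supp N x, ∀ y', ζ y y' = 0 := by
      intro y hy y'
      have h0 : ∑' y', ζ y y' = 0 := by
        rw [hrowm y, hμ, lazy_off G N hN t x y hy]
      have hle := Summable.le_tsum (hrowS y) y' (fun j _ => hpos y j)
      have := hpos y y'
      linarith [h0 ▸ hle]
    have hcol0 : ∀ y' ∉ supp N x', ∀ y, ζ y y' = 0 := by
      intro y' hy' y
      have h0 : ∑' y, ζ y y' = 0 := by
        rw [hcolm y', hν, lazy_off G N hN t x' y' hy']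
      have hle := Summable.le_tsum (hcolS y') y (fun j _ => hpos j y')
      have := hpos y y'
      linarith [h0 ▸ hle]
    have hc' : c = ∑ p ∈ (supp N x) ×ˢ (supp N x'),
        ζ p.1 p.2 * graphDist G p.1 p.2 := by
      rw [← hc.tsum_eq]
      apply tsum_eq_sum
      intro p hp
      rcases not_and_or.mp (by simpa [Finset.mem_product] using hp) with h | h
      · rw [hrow0 p.1 h p.2, zero_mul]
      · rw [hcol0 p.2 h p.1, zero_mul]
    have hstep : ∑ p ∈ (supp N x) ×ˢ (supp N x'), ζ p.1 p.2 * (f p.2 - f p.1)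
        ≤ ∑ p ∈ (supp N x) ×ˢ (supp N x'), ζ p.1 p.2 * graphDist G p.1 p.2 :=
      Finset.sum_le_sum (fun p _ =>
        mul_le_mul_of_nonneg_left (hdistb p.1 p.2) (hpos _ _))
    have hcolfin : ∀ y', ∑ y ∈ supp N x, ζ y y' = ν y' := by
      intro y'
      rw [← hcolm y']
      exact (tsum_eq_sum (fun y hy => hrow0 y hy y')).symm
    have hrowfin : ∀ y, ∑ y' ∈ supp N x', ζ y y' = μ y := by
      intro y
      rw [← hrowm y]
      exact (tsum_eq_sum (fun y' hy' => hcol0 y' hy' y)).symm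
    have hsplit : ∑ p ∈ (supp N x) ×ˢ (supp N x'), ζ p.1 p.2 * (f p.2 - f p.1) = 1 := by
      have e1 : ∑ p ∈ (supp N x) ×ˢ (supp N x'), ζ p.1 p.2 * f p.2 = f x' := by
        rw [Finset.sum_product]
        rw [Finset.sum_comm]
        have : ∀ y' ∈ supp N x', ∑ y ∈ supp N x, ζ y y' * f y' = ν y' * f y' := by
          intro y' _
          rw [← Finset.sum_mul, hcolfin y']
        rw [Finset.sum_congr rfl this]
        exact lazy_exp G N hN t hD a b hsum x'
      have e2 : ∑ p ∈ (supp N x) ×ˢ (supp N x'), ζ p.1 p.2 * f p.1 = f x := by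
        rw [Finset.sum_product]
        have : ∀ y ∈ supp N x, ∑ y' ∈ supp N x', ζ y y' * f y = μ y * f y := by
          intro y _
          rw [← Finset.sum_mul, hrowfin y]
        rw [Finset.sum_congr rfl this]
        exact lazy_exp G N hN t hD a b hsum x
      have e3 : ∑ p ∈ (supp N x) ×ˢ (supp N x'), ζ p.1 p.2 * (f p.2 - f p.1)
          = (∑ p ∈ (supp N x) ×ˢ (supp N x'), ζ p.1 p.2 * f p.2)
            - ∑ p ∈ (supp N x) ×ˢ (supp N x'), ζ p.1 p.2 * f p.1 := by
        rw [← Finset.sum_sub_distrib]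
        exact Finset.sum_congr rfl (fun p _ => by ring)
      rw [e3, e1, e2]
      show f x' - f x = 1
      rw [hf]
      simp only
      linarith [he]
    linarith [hc' ▸ hstep, hsplit]
  unfold W1
  exact le_antisymm (csInf_le ⟨1, fun c hc => hlb c hc⟩ hub) (le_csInf ⟨1, hub⟩ hlb)

end Main2


lemma kappa_zero (G : SimpleGraph (ℤ × ℤ)) (N : Finset (ℤ × ℤ))
    (hN : ∀ u v, G.Adj u v ↔ v - u ∈ N)
    (h10 : ((1:ℤ),(0:ℤ)) ∈ N) (hm10 : ((-1:ℤ),(0:ℤ)) ∈ N)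
    (h01 : ((0:ℤ),(1:ℤ)) ∈ N) (h0m1 : ((0:ℤ),(-1:ℤ)) ∈ N)
    (x x' : ℤ × ℤ) (hadj : G.Adj x x')
    (a b : ℝ)
    (hLip : ∀ n ∈ N, |a * (n.1:ℝ) + b * (n.2:ℝ)| ≤ 1)
    (hsum : ∑ n ∈ N, (a * (n.1:ℝ) + b * (n.2:ℝ)) = 0)
    (he : a * ((x'.1:ℝ) - (x.1:ℝ)) + b * ((x'.2:ℝ) - (x.2:ℝ)) = 1)
    (t : ℝ) (ht : 0 < t) (ht1 : t < 1) :
    kappa G t x x' = 0 := by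
  unfold kappa
  rw [W1_eq_one G N hN h10 hm10 h01 h0m1 x x' hadj a b hLip hsum he t ht ht1]
  have hd : graphDist G x x' = 1 := by
    unfold graphDist
    rw [SimpleGraph.dist_eq_one_iff_adj.mpr hadj]
    norm_num
  rw [hd]
  norm_num

lemma tendsto_of_kappa_zero (G : SimpleGraph (ℤ × ℤ)) (x x' : ℤ × ℤ)
    (h : ∀ t : ℝ, 0 < t → t < 1 → kappa G t x x' = 0) :
    Filter.Tendsto (fun t => kappa G t x x' / t) (nhdsWithin 0 (Set.Ioi 0)) (nhds 0) := by
  have hmem : Set.Ioo (0:ℝ) 1 ∈ nhdsWithin 0 (Set.Ioi 0) :=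
    Ioo_mem_nhdsGT_of_mem ⟨le_refl 0, one_pos⟩
  have hev : (fun _ : ℝ => (0:ℝ)) =ᶠ[nhdsWithin 0 (Set.Ioi 0)] (fun t => kappa G t x x' / t) := by
    filter_upwards [hmem] with t ht
    rw [h t ht.1 ht.2, zero_div]
  exact tendsto_const_nhds.congr' hev

def NTri : Finset (ℤ × ℤ) := {(1,0), (-1,0), (0,1), (0,-1), (1,1), (-1,-1)}
def NSq : Finset (ℤ × ℤ) := {(1,0), (-1,0), (0,1), (0,-1)}

lemma hN_tri : ∀ u v, triGraph.Adj u v ↔ v - u ∈ NTri := by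
  intro u v
  show (v.1 - u.1, v.2 - u.2) ∈
    ({(1,0), (-1,0), (0,1), (0,-1), (1,1), (-1,-1)} : Set (ℤ × ℤ)) ↔ _
  simp only [Set.mem_insert_iff, Set.mem_singleton_iff, Prod.mk.injEq, NTri,
    Finset.mem_insert, Finset.mem_singleton, Prod.ext_iff, Prod.fst_sub, Prod.snd_sub]

lemma hN_sq : ∀ u v, squareGraph.Adj u v ↔ v - u ∈ NSq := by
  intro u v
  show (v.1 - u.1).natAbs + (v.2 - u.2).natAbs = 1 ↔ _
  simp only [NSq, Finset.mem_insert, Finset.mem_singleton, Prod.ext_iff,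
    Prod.fst_sub, Prod.snd_sub]
  omega

/-- on the regular triangular tiling and on the square tiling,
the Ollivier–Ricci curvature of every edge equals `0`. -/
theorem triangular_and_square_tiling_ric_zero :
    (∀ x x', triGraph.Adj x x' →
      Filter.Tendsto (fun t => kappa triGraph t x x' / t)
        (nhdsWithin 0 (Set.Ioi 0)) (nhds 0)) ∧
    (∀ x x', squareGraph.Adj x x' →
      Filter.Tendsto (fun t => kappa squareGraph t x x' / t)
        (nhdsWithin 0 (Set.Ioi 0)) (nhds 0)) := by
  constructor
  · intro x x' hadj
    apply tendsto_of_kappa_zero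
    intro t ht ht1
    have heN := (hN_tri x x').1 hadj
    simp only [NTri, Finset.mem_insert, Finset.mem_singleton, Prod.ext_iff,
      Prod.fst_sub, Prod.snd_sub] at heN
    have key : ∀ (a b : ℝ),
        (∀ n ∈ NTri, |a * (n.1:ℝ) + b * (n.2:ℝ)| ≤ 1) →
        (∑ n ∈ NTri, (a * (n.1:ℝ) + b * (n.2:ℝ)) = 0) →
        (a * ((x'.1:ℝ) - (x.1:ℝ)) + b * ((x'.2:ℝ) - (x.2:ℝ)) = 1) →
        kappa triGraph t x x' = 0 := fun a b hL hs he =>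
      kappa_zero triGraph NTri hN_tri (by decide) (by decide) (by decide) (by decide)
        x x' hadj a b hL hs he t ht ht1
    have hsum_tri : ∀ (a b : ℝ), ∑ n ∈ NTri, (a * (n.1:ℝ) + b * (n.2:ℝ)) = 0 := by
      intro a b
      rw [NTri]
      norm_num [Finset.sum_insert, Finset.mem_insert, Finset.mem_singleton, Prod.ext_iff]
      ring
    rcases heN with ⟨h1, h2⟩ | ⟨h1, h2⟩ | ⟨h1, h2⟩ | ⟨h1, h2⟩ | ⟨h1, h2⟩ | ⟨h1, h2⟩
    · refine key 1 0 (by intro n hn; fin_cases hn <;> norm_num) (hsum_tri 1 0) ?_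
      have e1 : ((x'.1:ℝ) - (x.1:ℝ)) = 1 := by exact_mod_cast h1
      rw [e1]; norm_num
    · refine key (-1) 0 (by intro n hn; fin_cases hn <;> norm_num) (hsum_tri (-1) 0) ?_
      have e1 : ((x'.1:ℝ) - (x.1:ℝ)) = -1 := by exact_mod_cast h1
      rw [e1]; norm_num
    · refine key 0 1 (by intro n hn; fin_cases hn <;> norm_num) (hsum_tri 0 1) ?_
      have e2 : ((x'.2:ℝ) - (x.2:ℝ)) = 1 := by exact_mod_cast h2
      rw [e2]; norm_num
    · refine key 0 (-1) (by intro n hn; fin_cases hn <;> norm_num) (hsum_tri 0 (-1)) ?_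
      have e2 : ((x'.2:ℝ) - (x.2:ℝ)) = -1 := by exact_mod_cast h2
      rw [e2]; norm_num
    · refine key 1 0 (by intro n hn; fin_cases hn <;> norm_num) (hsum_tri 1 0) ?_
      have e1 : ((x'.1:ℝ) - (x.1:ℝ)) = 1 := by exact_mod_cast h1
      rw [e1]; norm_num
    · refine key (-1) 0 (by intro n hn; fin_cases hn <;> norm_num) (hsum_tri (-1) 0) ?_
      have e1 : ((x'.1:ℝ) - (x.1:ℝ)) = -1 := by exact_mod_cast h1
      rw [e1]; norm_num
  · intro x x' hadj
    apply tendsto_of_kappa_zero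
    intro t ht ht1
    have heN := (hN_sq x x').1 hadj
    simp only [NSq, Finset.mem_insert, Finset.mem_singleton, Prod.ext_iff,
      Prod.fst_sub, Prod.snd_sub] at heN
    have key : ∀ (a b : ℝ),
        (∀ n ∈ NSq, |a * (n.1:ℝ) + b * (n.2:ℝ)| ≤ 1) →
        (∑ n ∈ NSq, (a * (n.1:ℝ) + b * (n.2:ℝ)) = 0) →
        (a * ((x'.1:ℝ) - (x.1:ℝ)) + b * ((x'.2:ℝ) - (x.2:ℝ)) = 1) →
        kappa squareGraph t x x' = 0 := fun a b hL hs he =>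
      kappa_zero squareGraph NSq hN_sq (by decide) (by decide) (by decide) (by decide)
        x x' hadj a b hL hs he t ht ht1
    have hsum_sq : ∀ (a b : ℝ), ∑ n ∈ NSq, (a * (n.1:ℝ) + b * (n.2:ℝ)) = 0 := by
      intro a b
      rw [NSq]
      norm_num [Finset.sum_insert, Finset.mem_insert, Finset.mem_singleton, Prod.ext_iff]
    rcases heN with ⟨h1, h2⟩ | ⟨h1, h2⟩ | ⟨h1, h2⟩ | ⟨h1, h2⟩
    · refine key 1 0 (by intro n hn; fin_cases hn <;> norm_num) (hsum_sq 1 0) ?_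
      have e1 : ((x'.1:ℝ) - (x.1:ℝ)) = 1 := by exact_mod_cast h1
      rw [e1]; norm_num
    · refine key (-1) 0 (by intro n hn; fin_cases hn <;> norm_num) (hsum_sq (-1) 0) ?_
      have e1 : ((x'.1:ℝ) - (x.1:ℝ)) = -1 := by exact_mod_cast h1
      rw [e1]; norm_num
    · refine key 0 1 (by intro n hn; fin_cases hn <;> norm_num) (hsum_sq 0 1) ?_
      have e2 : ((x'.2:ℝ) - (x.2:ℝ)) = 1 := by exact_mod_cast h2
      rw [e2]; norm_num
    · refine key 0 (-1) (by intro n hn; fin_cases hn <;> norm_num) (hsum_sq 0 (-1)) ?_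
      have e2 : ((x'.2:ℝ) - (x.2:ℝ)) = -1 := by exact_mod_cast h2
      rw [e2]; norm_num
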